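/- Hensel's lemma with rv-data: Let K be a Henselian valued field with valuation ord : K× → Γ, let f(y) = Σ_{i=0}^m a_i y^i be a polynomial with coefficients in K, and suppose x ∈ K and an index i₀ > 0 are such that ord(a_{i₀} x^{i₀}) = min_{0 ≤ i ≤ m} ord(a_i x^i), ord(f(x)) > ord(a_{i₀} x^{i₀}), and ord(f'(x)) ≤ ord(a_{i₀} x^{i₀ - 1}). Then there exists a unique b ∈ K with f(b) = 0 and ord(b - x) > ord(x). -/

import Mathlib

open Polynomial Finset

section helpers
variable {R : Type*} [CommRing R]

lemma coeff_sumCX (g : ℕ → R) (n k : ℕ) :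
    (∑ i ∈ range n, C (g i) * X ^ i).coeff k = if k < n then g k else 0 := by
  classical
  rw [finset_sum_coeff]
  simp only [coeff_C_mul, coeff_X_pow, mul_ite, mul_one, mul_zero]
  rw [Finset.sum_ite_eq (range n) k g]
  simp [Finset.mem_range]

lemma eval_sumCX (g : ℕ → R) (n : ℕ) (t : R) :
    (∑ i ∈ range n, C (g i) * X ^ i).eval t = ∑ i ∈ range n, g i * t ^ i := by
  simp [eval_finset_sum]

lemma deriv_eval_sumCX (g : ℕ → R) (n : ℕ) (t : R) :
    (Polynomial.derivative (∑ i ∈ range n, C (g i) * X ^ i)).eval t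
      = ∑ i ∈ range n, g i * i * t ^ (i - 1) := by
  rw [map_sum]
  rw [eval_finset_sum]
  refine Finset.sum_congr rfl fun i _ => ?_
  rw [derivative_C_mul_X_pow]
  simp [mul_assoc]

end helpers

section gwz
variable {Γ₀ : Type*} [LinearOrderedCommGroupWithZero Γ₀] {a b c : Γ₀}

lemma gdiv_lt_one (hb : b ≠ 0) (h : a < b) : a * b⁻¹ < 1 := by
  have h2 : b⁻¹ * a < b⁻¹ * b := mul_lt_mul_of_pos_left h (zero_lt_iff.2 (inv_ne_zero hb))
  rwa [inv_mul_cancel₀ hb, mul_comm] at h2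

lemma gdiv_le_one (hb : b ≠ 0) (h : a ≤ b) : a * b⁻¹ ≤ 1 := by
  have h2 := mul_le_mul_left h b⁻¹
  rwa [mul_inv_cancel₀ hb] at h2

lemma gmul_lt_of_lt_one_right (ha : a ≠ 0) (h1 : c < 1) : a * c < a := by
  have h2 : a * c < a * 1 := mul_lt_mul_of_pos_left h1 (zero_lt_iff.2 ha)
  rwa [mul_one] at h2

lemma gle_mul_inv_of_mul_le (hc : c ≠ 0) (h : a * c ≤ b) : a ≤ b * c⁻¹ := by
  have h2 := mul_le_mul_left h c⁻¹
  simpa [mul_assoc, mul_inv_cancel₀ hc] using h2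

lemma gmul_le_of_le_mul_inv (hc : c ≠ 0) (h : a ≤ b * c⁻¹) : a * c ≤ b := by
  have h2 := mul_le_mul_left h c
  simpa [mul_assoc, inv_mul_cancel₀ hc] using h2

lemma gterm_le {A u w M : Γ₀} {i j : ℕ} (hu : u ≠ 0) (hA : A * u ^ j ≤ M)
    (hw : w ≤ u) (hij : i ≤ j) : A * w ^ j ≤ M * (w * u⁻¹) ^ i := by
  have huw : u * (w * u⁻¹) = w := by
    rw [mul_comm u, mul_assoc, inv_mul_cancel₀ hu, mul_one]
  calc A * w ^ j = A * u ^ j * (w * u⁻¹) ^ j := by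
        rw [mul_assoc, ← mul_pow, huw]
    _ ≤ M * (w * u⁻¹) ^ j := mul_le_mul_left hA _
    _ ≤ M * (w * u⁻¹) ^ i :=
        mul_le_mul' le_rfl (pow_le_pow_of_le_one zero_le' (gdiv_le_one hu hw) hij)

end gwz

section val
variable {K : Type*} [Field K] {Γ₀ : Type*} [LinearOrderedCommGroupWithZero Γ₀]

lemma val_natCast_le_one (v : Valuation K Γ₀) (n : ℕ) : v (n : K) ≤ 1 := by
  induction n with
  | zero => simp
  | succ m ih => push_cast; exact v.map_add_le ih (le_of_eq v.map_one)

lemma taylor_coeff_bound (v : Valuation K Γ₀) (g : K[X]) (x : K) (hx : v x ≠ 0) (B : Γ₀)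
    (hB : ∀ i, v (g.coeff i) * v x ^ i ≤ B) (y : K) (hy : v y ≤ v x) (j : ℕ) :
    v ((taylor y g).coeff j) * v x ^ j ≤ B := by
  have hxj : (v x ^ j) ≠ 0 := pow_ne_zero _ hx
  rw [taylor_coeff]
  suffices h : v ((hasseDeriv j g).eval y) ≤ B * (v x ^ j)⁻¹ by
    have h2 := mul_le_mul_left h (v x ^ j)
    simpa [mul_assoc, inv_mul_cancel₀ hxj] using h2
  rw [eval_eq_sum_range]
  refine v.map_sum_le fun n _ => ?_
  rw [hasseDeriv_coeff]
  have h1 : v (↑((n + j).choose j) * g.coeff (n + j) * y ^ n)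
      ≤ v (g.coeff (n + j)) * v x ^ n := by
    rw [map_mul, map_mul, map_pow]
    calc v ((((n + j).choose j : ℕ) : K)) * v (g.coeff (n + j)) * v y ^ n
        ≤ 1 * v (g.coeff (n + j)) * v x ^ n := by
          exact mul_le_mul' (mul_le_mul' (val_natCast_le_one v _) le_rfl)
            (pow_le_pow_left' hy n)
      _ = v (g.coeff (n + j)) * v x ^ n := by rw [one_mul]
  refine h1.trans ?_
  exact gle_mul_inv_of_mul_le hxj (by rw [mul_assoc, ← pow_add]; exact hB (n + j))

end val

/-- Hensel's lemma with rv-data: if `K` is a Henselian valued field,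
`f` a polynomial over `K`, `x ∈ K` nonzero and `i₀ > 0` an index such that the
term `a_{i₀} x^{i₀}` has minimal valuation among all terms `a_i x^i`,
`ord f(x) > ord (a_{i₀} x^{i₀})` and `ord f'(x) ≤ ord (a_{i₀} x^{i₀-1})`,
then there is a unique `b` with `f(b) = 0` and `ord (b - x) > ord x`
(i.e. `rv b = rv x`).  (Written multiplicatively: `ord u > ord w ↔ v u < v w`.) -/
theorem henselian_root_with_rv_data
    (K : Type*) [Field K] (Γ₀ : Type*) [LinearOrderedCommGroupWithZero Γ₀]
    [hv : Valued K Γ₀]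
    [HenselianLocalRing (Valued.v (R := K) (Γ₀ := Γ₀)).valuationSubring]
    (f : Polynomial K) (x : K) (hx : x ≠ 0)
    (i₀ : ℕ) (hi₀pos : 0 < i₀) (hi₀le : i₀ ≤ f.natDegree)
    (hmin : ∀ i ≤ f.natDegree,
      Valued.v (f.coeff i * x ^ i) ≤ Valued.v (f.coeff i₀ * x ^ i₀))
    (hfx : Valued.v (f.eval x) < Valued.v (f.coeff i₀ * x ^ i₀))
    (hf'x : Valued.v (f.coeff i₀ * x ^ (i₀ - 1)) ≤ Valued.v ((Polynomial.derivative f).eval x)) :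
    ∃! b : K, f.eval b = 0 ∧ Valued.v (b - x) < Valued.v x := by
  classical
  set v : Valuation K Γ₀ := Valued.v with hvdef
  set N := f.natDegree with hNdef
  have hN : 1 ≤ N := le_trans hi₀pos hi₀le
  have hu0 : v x ≠ 0 := v.ne_zero_iff.mpr hx
  set u := v x with hudef
  set Mv := v (f.coeff i₀ * x ^ i₀) with hMdef
  have hMv0 : Mv ≠ 0 := ne_zero_of_lt hfx
  have hMu0 : Mv * u⁻¹ ≠ 0 := mul_ne_zero hMv0 (inv_ne_zero hu0)
  -- coefficient bounds
  have hfB : ∀ i, v (f.coeff i) * u ^ i ≤ Mv := by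
    intro i
    rcases le_or_gt i N with h | h
    · have h2 := hmin i h
      rwa [map_mul, map_pow] at h2
    · rw [f.coeff_eq_zero_of_natDegree_lt h]
      simp
  have hf'B : ∀ i, v ((Polynomial.derivative f).coeff i) * u ^ i ≤ Mv * u⁻¹ := by
    intro i
    rw [coeff_derivative]
    have h1 : v (f.coeff (i + 1) * (↑i + 1)) ≤ v (f.coeff (i + 1)) := by
      rw [map_mul]
      have he : ((i : K) + 1) = ((i + 1 : ℕ) : K) := by push_cast; ring
      rw [he]
      calc v (f.coeff (i + 1)) * v (((i + 1 : ℕ) : K))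
          ≤ v (f.coeff (i + 1)) * 1 := mul_le_mul' le_rfl (val_natCast_le_one v _)
        _ = v (f.coeff (i + 1)) := mul_one _
    refine le_trans (mul_le_mul_left h1 _) ?_
    refine gle_mul_inv_of_mul_le hu0 ?_
    have h2 := hfB (i + 1)
    rwa [pow_succ, ← mul_assoc] at h2
  -- derivative value at x
  have hvD : v ((Polynomial.derivative f).eval x) = Mv * u⁻¹ := by
    refine le_antisymm ?_ ?_
    · have h1 := taylor_coeff_bound v f x hu0 Mv hfB x le_rfl 1
      rw [taylor_coeff_one, pow_one] at h1
      exact gle_mul_inv_of_mul_le hu0 h1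
    · refine le_trans (le_of_eq ?_) hf'x
      have hxe : f.coeff i₀ * x ^ (i₀ - 1) * x = f.coeff i₀ * x ^ i₀ := by
        rw [mul_assoc, ← pow_succ]
        congr 2
        omega
      have h2 : v (f.coeff i₀ * x ^ (i₀ - 1)) * u = Mv := by
        rw [hMdef, ← hxe]
        exact (v.map_mul _ _).symm
      rw [← h2, mul_assoc, mul_inv_cancel₀ hu0, mul_one]
  -- derivative value near x
  have hfder : ∀ b : K, v (b - x) < u → v ((Polynomial.derivative f).eval b) = Mv * u⁻¹ := by
    intro b hb
    have he1 : (Polynomial.derivative f).eval b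
        = (taylor x (Polynomial.derivative f)).eval (b - x) := by
      rw [taylor_eval, sub_add_cancel]
    rw [he1, eval_eq_sum_range, ← Finset.sum_range_add_sum_Ico _
      (show 1 ≤ (taylor x (Polynomial.derivative f)).natDegree + 1 by omega),
      Finset.sum_range_one]
    have h00 : (taylor x (Polynomial.derivative f)).coeff 0 * (b - x) ^ 0
        = (Polynomial.derivative f).eval x := by
      simp [taylor_coeff_zero]
    rw [h00]
    have hrest : v (∑ j ∈ Ico 1 ((taylor x (Polynomial.derivative f)).natDegree + 1),
        (taylor x (Polynomial.derivative f)).coeff j * (b - x) ^ j) < Mv * u⁻¹ := by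
      refine v.map_sum_lt hMu0 fun j hj => ?_
      obtain ⟨hj1, -⟩ := Finset.mem_Ico.mp hj
      have hcj := taylor_coeff_bound v (Polynomial.derivative f) x hu0 (Mv * u⁻¹) hf'B x le_rfl j
      rw [map_mul, map_pow]
      calc v ((taylor x (Polynomial.derivative f)).coeff j) * v (b - x) ^ j
          ≤ (Mv * u⁻¹) * (v (b - x) * u⁻¹) ^ 1 := gterm_le hu0 hcj hb.le hj1
        _ = (Mv * u⁻¹) * (v (b - x) * u⁻¹) := by rw [pow_one]
        _ < Mv * u⁻¹ := gmul_lt_of_lt_one_right hMu0 (gdiv_lt_one hu0 hb)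
    rw [v.map_add_eq_of_lt_left (lt_of_lt_of_eq hrest hvD.symm)]
    exact hvD
  -- uniqueness
  have huniq : ∀ b₁ b₂ : K, f.eval b₁ = 0 → v (b₁ - x) < u →
      f.eval b₂ = 0 → v (b₂ - x) < u → b₁ = b₂ := by
    intro b1 b2 e1 l1 e2 l2
    by_contra hne
    have ht0 : b2 - b1 ≠ 0 := sub_ne_zero.mpr (Ne.symm hne)
    have hvt0 : v (b2 - b1) ≠ 0 := v.ne_zero_iff.mpr ht0
    have hvtu : v (b2 - b1) < u := by
      have he : b2 - b1 = (b2 - x) - (b1 - x) := by ring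
      rw [he]
      exact lt_of_le_of_lt (v.map_sub _ _) (max_lt l2 l1)
    have hvb1 : v b1 = u := by
      have hb1 : b1 = (b1 - x) + x := by ring
      rw [hb1]
      exact v.map_add_eq_of_lt_right l1
    have hexp : (0 : K) = ∑ j ∈ range (N + 1), (taylor b1 f).coeff j * (b2 - b1) ^ j := by
      calc (0 : K) = f.eval b2 := e2.symm
        _ = (taylor b1 f).eval (b2 - b1) := (taylor_eval_sub b1 f b2).symm
        _ = ∑ j ∈ range (N + 1), (taylor b1 f).coeff j * (b2 - b1) ^ j := by
            rw [eval_eq_sum_range' (n := N + 1) (by rw [natDegree_taylor, ← hNdef]; omega)]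
    rw [← Finset.sum_range_add_sum_Ico _ (show 2 ≤ N + 1 by omega),
      Finset.sum_range_succ, Finset.sum_range_one, taylor_coeff_zero, e1,
      zero_mul, zero_add] at hexp
    have hkey : (taylor b1 f).coeff 1 * (b2 - b1) ^ 1
        = - ∑ j ∈ Ico 2 (N + 1), (taylor b1 f).coeff j * (b2 - b1) ^ j :=
      eq_neg_of_add_eq_zero_left hexp.symm
    have hL : v ((taylor b1 f).coeff 1 * (b2 - b1) ^ 1) = (Mv * u⁻¹) * v (b2 - b1) := by
      rw [taylor_coeff_one, map_mul, map_pow, pow_one, hfder b1 l1]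
    have hMut0 : (Mv * u⁻¹) * v (b2 - b1) ≠ 0 := mul_ne_zero hMu0 hvt0
    have hR : v (∑ j ∈ Ico 2 (N + 1), (taylor b1 f).coeff j * (b2 - b1) ^ j)
        < (Mv * u⁻¹) * v (b2 - b1) := by
      refine v.map_sum_lt hMut0 fun j hj => ?_
      obtain ⟨h2j, -⟩ := Finset.mem_Ico.mp hj
      have hcj := taylor_coeff_bound v f x hu0 Mv hfB b1 (le_of_eq hvb1) j
      rw [map_mul, map_pow]
      calc v ((taylor b1 f).coeff j) * v (b2 - b1) ^ j
          ≤ Mv * (v (b2 - b1) * u⁻¹) ^ 2 := gterm_le hu0 hcj hvtu.le h2j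
        _ = ((Mv * u⁻¹) * v (b2 - b1)) * (v (b2 - b1) * u⁻¹) := by
            rw [pow_two]; ac_rfl
        _ < (Mv * u⁻¹) * v (b2 - b1) :=
            gmul_lt_of_lt_one_right hMut0 (gdiv_lt_one hu0 hvtu)
    rw [hkey, v.map_neg] at hL
    rw [hL] at hR
    exact lt_irrefl _ hR
  -- existence
  rcases eq_or_ne (f.eval x) 0 with hfx0 | hfx0
  · refine ⟨x, ⟨hfx0, by simpa using (zero_lt_iff.2 hu0)⟩, fun y hy =>
      huniq y x hy.1 hy.2 hfx0 (by simpa using (zero_lt_iff.2 hu0))⟩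
  · -- main case: f.eval x ≠ 0
    set O := v.valuationSubring with hOdef
    have hInt : v.Integers O :=
      ⟨fun a b h => Subtype.ext h, fun r => r.2, fun r hr => ⟨⟨r, hr⟩, rfl⟩⟩
    set Fx := f.eval x with hFxdef
    have hV0 : v Fx ≠ 0 := v.ne_zero_iff.mpr hfx0
    set V := v Fx with hVdef
    have hD0 : (Polynomial.derivative f).eval x ≠ 0 :=
      v.ne_zero_iff.mp (by rw [hvD]; exact hMu0)
    set β := Fx * ((Polynomial.derivative f).eval x)⁻¹ with hβdef
    have hDβ : ((Polynomial.derivative f).eval x) * β = Fx := by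
      rw [hβdef]
      field_simp
    set γ := V * Mv⁻¹ with hγdef
    have hγ0 : γ ≠ 0 := mul_ne_zero hV0 (inv_ne_zero hMv0)
    have hγ1 : γ < 1 := gdiv_lt_one hMv0 hfx
    have hMγ : Mv * γ = V := by
      rw [hγdef, mul_comm V, ← mul_assoc, mul_inv_cancel₀ hMv0, one_mul]
    have hvβu : v β = γ * u := by
      have h1 : v β = V * (Mv * u⁻¹)⁻¹ := by
        rw [hβdef, map_mul, map_inv₀, hvD]
      rw [h1, mul_inv_rev, inv_inv, hγdef]
      ac_rfl
    have hvβx : v β < u := by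
      rw [hvβu]
      have h2 : u * γ < u * 1 := mul_lt_mul_of_pos_left hγ1 (zero_lt_iff.2 hu0)
      rwa [mul_one, mul_comm] at h2
    -- taylor coefficients of f at x
    set c : ℕ → K := fun j => (taylor x f).coeff j with hcdef
    have hc0 : c 0 = Fx := taylor_coeff_zero x f
    have hc1 : c 1 = (Polynomial.derivative f).eval x := taylor_coeff_one x f
    have hcB : ∀ j, v (c j) * u ^ j ≤ Mv := fun j =>
      taylor_coeff_bound v f x hu0 Mv hfB x le_rfl j
    have hγe : v β * u⁻¹ = γ := by
      rw [hvβu, mul_assoc, mul_inv_cancel₀ hu0, mul_one]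
    have hcβ : ∀ j, v (c j) * (v β) ^ j ≤ Mv * γ ^ j := by
      intro j
      have h3 := gterm_le (i := j) (j := j) hu0 (hcB j) hvβx.le le_rfl
      rwa [hγe] at h3
    have hMγ1 : Mv * γ ^ 1 * V⁻¹ = 1 := by
      rw [pow_one, hMγ, mul_inv_cancel₀ hV0]
    have hMγ2 : Mv * γ ^ 2 * V⁻¹ = γ := by
      rw [pow_two, ← mul_assoc, hMγ, mul_comm V γ, mul_assoc, mul_inv_cancel₀ hV0, mul_one]
    -- the coefficients of the auxiliary monic polynomial
    set d : ℕ → K := fun k => c (N - k) * β ^ (N - k) * Fx⁻¹ with hddef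
    have hdval : ∀ k, v (d k) = v (c (N - k)) * v β ^ (N - k) * V⁻¹ := by
      intro k
      rw [hddef]
      simp only
      rw [map_mul, map_mul, map_pow, map_inv₀]
    have hd1 : ∀ k, N ≤ k → d k = 1 := by
      intro k hk
      have hNk : N - k = 0 := by omega
      rw [hddef]
      simp only [hNk, pow_zero, mul_one]
      rw [hc0, mul_inv_cancel₀ hfx0]
    have hdbound : ∀ k i, i ≤ N - k → v (d k) ≤ Mv * γ ^ i * V⁻¹ := by
      intro k i hi
      rw [hdval]
      refine mul_le_mul_left ((hcβ (N - k)).trans (mul_le_mul' le_rfl ?_)) V⁻¹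
      exact pow_le_pow_of_le_one zero_le' hγ1.le hi
    have hdmem : ∀ k, d k ∈ O := by
      intro k
      rcases lt_or_ge k N with hk | hk
      · refine (v.mem_valuationSubring_iff _).mpr ?_
        have h4 := hdbound k 1 (by omega)
        rwa [hMγ1] at h4
      · rw [hd1 k hk]
        exact one_mem O
    set dO : ℕ → O := fun k => ⟨d k, hdmem k⟩ with hdOdef
    set PR : Polynomial O := ∑ k ∈ range (N + 1), C (dO k) * X ^ k with hPRdef
    have hPRcoeff : ∀ k, PR.coeff k = if k < N + 1 then dO k else 0 :=
      fun k => coeff_sumCX dO (N + 1) k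
    have hPRmonic : PR.Monic := by
      refine monic_of_natDegree_le_of_coeff_eq_one N ?_ ?_
      · refine natDegree_le_iff_coeff_eq_zero.mpr fun m hm => ?_
        rw [hPRcoeff m, if_neg (by omega)]
      · rw [hPRcoeff N, if_pos (by omega)]
        exact Subtype.ext (hd1 N le_rfl)
    -- evaluation transfer to K
    have hevalO : ∀ r : O, ((PR.eval r : O) : K) = ∑ k ∈ range (N + 1), d k * (r : K) ^ k := by
      intro r
      show (algebraMap O K) (PR.eval r) = _
      rw [hPRdef, eval_sumCX, map_sum]
      exact sum_congr rfl fun k _ => by rw [map_mul, map_pow]; rfl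
    have hevalO' : ∀ r : O, (((Polynomial.derivative PR).eval r : O) : K)
        = ∑ k ∈ range (N + 1), d k * k * (r : K) ^ (k - 1) := by
      intro r
      show (algebraMap O K) ((Polynomial.derivative PR).eval r) = _
      rw [hPRdef, deriv_eval_sumCX, map_sum]
      refine sum_congr rfl fun k _ => ?_
      rw [map_mul, map_mul, map_pow, map_natCast]
      rfl
    -- reflection identity
    have hreflect : ∀ g : ℕ → K, ∑ k ∈ range (N + 1), d k * g k
        = ∑ j ∈ range (N + 1), c j * β ^ j * Fx⁻¹ * g (N - j) := by
      intro g
      rw [← Finset.sum_range_reflect (fun k => d k * g k) (N + 1)]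
      refine sum_congr rfl fun j hj => ?_
      have hjN : j ≤ N := by have := mem_range.mp hj; omega
      have h5 : N + 1 - 1 - j = N - j := by omega
      rw [h5, hddef]
      simp only
      rw [show N - (N - j) = j by omega]
    -- the term bound for indices ≥ 2
    have hterm : ∀ j, 2 ≤ j → ∀ w : K, v w ≤ 1 → v (c j * β ^ j * Fx⁻¹ * w) ≤ γ := by
      intro j h2 w hw
      rw [map_mul, map_mul, map_mul, map_pow, map_inv₀]
      have h6 : v (c j) * v β ^ j ≤ Mv * γ ^ 2 :=
        (hcβ j).trans (mul_le_mul' le_rfl (pow_le_pow_of_le_one zero_le' hγ1.le h2))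
      calc v (c j) * v β ^ j * V⁻¹ * v w
          ≤ Mv * γ ^ 2 * V⁻¹ * 1 := mul_le_mul' (mul_le_mul_left h6 _) hw
        _ = γ := by rw [mul_one, hMγ2]
    have hneg1 : ∀ m : ℕ, v ((-1 : K) ^ m) = 1 := by
      intro m
      rw [map_pow, v.map_neg, v.map_one, one_pow]
    -- value of PR at -1
    have hcoe1 : (((-1 : O) : K)) = -1 := rfl
    have hm1 : v (((PR.eval (-1) : O) : K)) < 1 := by
      rw [hevalO (-1), hcoe1, hreflect (fun k => (-1 : K) ^ k)]
      rw [← Finset.sum_range_add_sum_Ico _ (show 2 ≤ N + 1 by omega)]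
      have hfirst : ∑ j ∈ range 2, c j * β ^ j * Fx⁻¹ * (-1 : K) ^ (N - j) = 0 := by
        rw [Finset.sum_range_succ, Finset.sum_range_one, hc0, hc1, pow_zero, pow_one,
          hDβ, mul_one, mul_inv_cancel₀ hfx0]
        obtain ⟨m, hm⟩ : ∃ m, N = m + 1 := ⟨N - 1, by omega⟩
        rw [hm]
        have e0 : m + 1 - 0 = m + 1 := by omega
        have e1 : m + 1 - 1 = m := by omega
        rw [e0, e1, pow_succ]
        ring
      rw [hfirst, zero_add]
      refine lt_of_le_of_lt (v.map_sum_le fun j hj => ?_) hγ1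
      obtain ⟨h2j, -⟩ := Finset.mem_Ico.mp hj
      exact hterm j h2j _ (le_of_eq (hneg1 _))
    -- value of derivative of PR at -1
    have hm2 : v ((((Polynomial.derivative PR).eval (-1) : O) : K)) = 1 := by
      rw [hevalO' (-1), hcoe1]
      have hg : ∀ k, d k * k * (-1 : K) ^ (k - 1) = d k * ((k : K) * (-1 : K) ^ (k - 1)) := by
        intro k
        ring
      rw [Finset.sum_congr rfl fun k _ => hg k,
        hreflect (fun k => (k : K) * (-1 : K) ^ (k - 1)),
        ← Finset.sum_range_add_sum_Ico _ (show 2 ≤ N + 1 by omega)]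
      have hfirst : ∑ j ∈ range 2, c j * β ^ j * Fx⁻¹ *
          (((N - j : ℕ) : K) * (-1 : K) ^ (N - j - 1)) = (-1 : K) ^ (N - 1) := by
        rw [Finset.sum_range_succ, Finset.sum_range_one, hc0, hc1, pow_zero, pow_one,
          hDβ, mul_one, mul_inv_cancel₀ hfx0, one_mul, one_mul]
        rcases Nat.lt_or_ge N 2 with hN2 | hN2
        · have hNe : N = 1 := by omega
          rw [hNe]
          norm_num
        · obtain ⟨m', hNe⟩ : ∃ m', N = m' + 2 := ⟨N - 2, by omega⟩
          rw [hNe]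
          have e3 : m' + 2 - 1 - 1 = m' := by omega
          have e2 : m' + 2 - 1 = m' + 1 := by omega
          rw [e3, e2]
          push_cast
          rw [pow_succ]
          ring
      rw [hfirst]
      have hrest2 : v (∑ j ∈ Ico 2 (N + 1), c j * β ^ j * Fx⁻¹ *
          (((N - j : ℕ) : K) * (-1 : K) ^ (N - j - 1))) < 1 := by
        refine lt_of_le_of_lt (v.map_sum_le fun j hj => ?_) hγ1
        obtain ⟨h2j, -⟩ := Finset.mem_Ico.mp hj
        refine hterm j h2j _ ?_
        rw [map_mul]
        calc v (((N - j : ℕ) : K)) * v ((-1 : K) ^ (N - j - 1))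
            ≤ 1 * 1 := mul_le_mul' (val_natCast_le_one v _) (le_of_eq (hneg1 _))
          _ = 1 := mul_one 1
      rw [v.map_add_eq_of_lt_left (by rw [hneg1 (N - 1)]; exact hrest2)]
      exact hneg1 (N - 1)
    -- apply Hensel's lemma
    have h1mem : PR.eval (-1) ∈ IsLocalRing.maximalIdeal O := by
      rw [IsLocalRing.mem_maximalIdeal, mem_nonunits_iff]
      intro hun
      exact absurd (hInt.isUnit_iff_valuation_eq_one.mp hun) (ne_of_lt hm1)
    have h2unit : IsUnit ((Polynomial.derivative PR).eval (-1)) :=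
      hInt.isUnit_iff_valuation_eq_one.mpr hm2
    obtain ⟨a, haroot, hamem⟩ := HenselianLocalRing.is_henselian PR hPRmonic (-1) h1mem h2unit
    have hz1 : v ((a : K) + 1) < 1 := by
      have h7 : a - (-1) = a + 1 := by ring
      rw [h7] at hamem
      rw [IsLocalRing.mem_maximalIdeal, mem_nonunits_iff] at hamem
      have hle : v ((a : K) + 1) ≤ 1 := by
        have := (a + 1).2
        rwa [show (((a + 1 : O) : K)) = (a : K) + 1 from rfl] at this
      refine lt_of_le_of_ne hle fun heq => hamem ?_
      refine hInt.isUnit_iff_valuation_eq_one.mpr ?_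
      rwa [show (algebraMap O K) (a + 1) = (a : K) + 1 from rfl]
    have hvz : v (a : K) = 1 := by
      have h8 : (a : K) = ((a : K) + 1) + (-1) := by ring
      rw [h8, v.map_add_eq_of_lt_right (by rw [v.map_neg, v.map_one]; exact hz1),
        v.map_neg, v.map_one]
    have hz0 : (a : K) ≠ 0 := v.ne_zero_iff.mp (by rw [hvz]; exact one_ne_zero)
    -- the root of f
    have hProot : ∑ j ∈ range (N + 1), c j * β ^ j * Fx⁻¹ * (a : K) ^ (N - j) = 0 := by
      have h9 : PR.eval a = 0 := haroot
      have h10 := congrArg (fun w : O => (w : K)) h9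
      rw [hevalO a] at h10
      rw [← hreflect (fun k => (a : K) ^ k)]
      simpa using h10
    have h6 : ∑ j ∈ range (N + 1), c j * β ^ j * (a : K) ^ (N - j) = 0 := by
      have h8 : ∑ j ∈ range (N + 1), c j * β ^ j * (a : K) ^ (N - j)
          = (∑ j ∈ range (N + 1), c j * β ^ j * Fx⁻¹ * (a : K) ^ (N - j)) * Fx := by
        rw [Finset.sum_mul]
        refine sum_congr rfl fun j _ => ?_
        first
        | (field_simp; ring)
        | field_simp
      rw [h8, hProot, zero_mul]
    set b := x + β * (a : K)⁻¹ with hbdef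
    have hroot : f.eval b = 0 := by
      have hS : f.eval b = ∑ j ∈ range (N + 1), c j * (β * (a : K)⁻¹) ^ j := by
        have h11 : f.eval b = (taylor x f).eval (β * (a : K)⁻¹) := by
          rw [taylor_eval, hbdef, add_comm]
        rw [h11, eval_eq_sum_range' (n := N + 1) (by rw [natDegree_taylor, ← hNdef]; omega)]
      have h12 : f.eval b * (a : K) ^ N = 0 := by
        rw [hS, Finset.sum_mul, ← h6]
        refine sum_congr rfl fun j hj => ?_
        have hjN : j ≤ N := by have := mem_range.mp hj; omega
        rw [mul_pow, inv_pow, pow_sub₀ (a : K) hz0 hjN]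
        ring
      rcases mul_eq_zero.mp h12 with h | h
      · exact h
      · exact absurd h (pow_ne_zero _ hz0)
    have hlt : v (b - x) < u := by
      have h13 : b - x = β * (a : K)⁻¹ := by rw [hbdef]; ring
      rw [h13, map_mul, map_inv₀, hvz, inv_one, mul_one]
      exact hvβx
    exact ⟨b, ⟨hroot, hlt⟩, fun y hy => huniq y b hy.1 hy.2 hroot hlt⟩
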